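/- Let n ≥ 2 and M ∈ ℝ^{n×n}. Then MᵀM is symmetric positive semidefinite, the maximum of Q ↦ trace{MQ} over Q ∈ O(n) is attained and equals trace{(MᵀM)^{1/2}}, and moreover trace{(MᵀM)^{1/2}} ≥ n·|det M|^{1/n}. -/

import Mathlib

open MeasureTheory Matrix

noncomputable section

abbrev EucSp (n : ℕ) := EuclideanSpace ℝ (Fin n)

/-- Principal square root of a positive semidefinite matrix (zero otherwise). -/
noncomputable def msqrt {n : ℕ} (A : Matrix (Fin n) (Fin n) ℝ) : Matrix (Fin n) (Fin n) ℝ :=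
  open scoped Classical in
  if h : A.PosSemidef then (h.1.eigenvectorUnitary : Matrix (Fin n) (Fin n) ℝ) *
    diagonal ((↑) ∘ (Real.sqrt ·) ∘ h.1.eigenvalues) *
    (star h.1.eigenvectorUnitary : Matrix (Fin n) (Fin n) ℝ) else 0

/-- `A ∈ 𝒜(λ,Λ)`: symmetric and uniformly elliptic. -/
def UnifElliptic {n : ℕ} (lam Lam : ℝ) (A : Matrix (Fin n) (Fin n) ℝ) : Prop :=
  A.IsSymm ∧ ∀ ξ : Fin n → ℝ,
    lam * (ξ ⬝ᵥ ξ) ≤ ξ ⬝ᵥ A.mulVec ξ ∧ ξ ⬝ᵥ A.mulVec ξ ≤ Lam * (ξ ⬝ᵥ ξ)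

/-- Membership in the orthogonal group `O(n)`. -/
def IsOrthMat {n : ℕ} (Q : Matrix (Fin n) (Fin n) ℝ) : Prop :=
  Q * Qᵀ = 1 ∧ Qᵀ * Q = 1

/-- Matrix acting on Euclidean space. -/
noncomputable def mvE {n : ℕ} (M : Matrix (Fin n) (Fin n) ℝ) (y : EucSp n) : EucSp n :=
  (EuclideanSpace.equiv (Fin n) ℝ).symm (M.mulVec ((EuclideanSpace.equiv (Fin n) ℝ) y))

/-- The ellipsoid `x + ε A^{1/2} 𝔹`. -/
noncomputable def ellipsoid {n : ℕ} (ε : ℝ) (M : Matrix (Fin n) (Fin n) ℝ) (x : EucSp n) :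
    Set (EucSp n) :=
  (fun y => x + ε • mvE (msqrt M) y) '' Metric.ball (0 : EucSp n) 1

/-- The matrix `J_α = diag(α-1, 1, …, 1)`. -/
noncomputable def Jmat (n : ℕ) (α : ℝ) : Matrix (Fin n) (Fin n) ℝ :=
  Matrix.diagonal (fun i => if (i : ℕ) = 0 then α - 1 else 1)

/-- Reflection in the first coordinate axis. -/
noncomputable def J0 (n : ℕ) : Matrix (Fin n) (Fin n) ℝ :=
  Matrix.diagonal (fun i => if (i : ℕ) = 0 then -1 else 1)

/-- The first standard basis vector `e₁`. -/
noncomputable def e1 (n : ℕ) : EucSp n :=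
  (EuclideanSpace.equiv (Fin n) ℝ).symm (fun i => if (i : ℕ) = 0 then 1 else 0)

/-- `f₁(x,z) = C|x-z|^α + C̃|x+z|²`. -/
noncomputable def f1 {n : ℕ} (α C Ct : ℝ) (x z : EucSp n) : ℝ :=
  C * ‖x - z‖ ^ α + Ct * ‖x + z‖ ^ 2

/-- The annular step function `f₂`. -/
noncomputable def f2 {n : ℕ} (α C lam ε : ℝ) (N : ℕ) (x z : EucSp n) : ℝ :=
  if ‖x - z‖ / (Real.sqrt lam * ε) > (N : ℝ) then 0
  else C ^ (2 * (2 * N - ⌈2 * ‖x - z‖ / (Real.sqrt lam * ε)⌉₊)) * ε ^ α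

/-- optimization of `Q ↦ trace{MQ}` over the orthogonal group
(Lemma 4.4). -/
theorem stmt4 {n : ℕ} (hn : 2 ≤ n) (M : Matrix (Fin n) (Fin n) ℝ) :
    (Mᵀ * M).IsSymm ∧ (Mᵀ * M).PosSemidef ∧
    IsGreatest {t : ℝ | ∃ Q, IsOrthMat Q ∧ t = Matrix.trace (M * Q)}
      (Matrix.trace (msqrt (Mᵀ * M))) ∧
    Matrix.trace (msqrt (Mᵀ * M)) ≥ (n : ℝ) * |M.det| ^ ((1 : ℝ) / n) := by
  classical
  have hsymm : (Mᵀ * M).IsSymm := by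
    rw [Matrix.IsSymm, Matrix.transpose_mul, Matrix.transpose_transpose]
  have hPSD : (Mᵀ * M).PosSemidef := by
    have := Matrix.posSemidef_conjTranspose_mul_self M
    rwa [Matrix.conjTranspose_eq_transpose_of_trivial] at this
  set S : Matrix (Fin n) (Fin n) ℝ := (hPSD.1.eigenvectorUnitary : Matrix (Fin n) (Fin n) ℝ) *
    diagonal ((↑) ∘ (Real.sqrt ·) ∘ hPSD.1.eigenvalues) *
    (star hPSD.1.eigenvectorUnitary : Matrix (Fin n) (Fin n) ℝ) with hSdef
  have hmsqrt : msqrt (Mᵀ * M) = S := by rw [msqrt, dif_pos hPSD]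
  have hS : S.PosSemidef := by
    rw [hSdef, Matrix.star_eq_conjTranspose]
    exact (posSemidef_diagonal_iff.mpr fun i => by simp [Real.sqrt_nonneg]).mul_mul_conjTranspose_same _
  have hSS : S * S = Mᵀ * M := by
    have hWW : (star hPSD.1.eigenvectorUnitary : Matrix (Fin n) (Fin n) ℝ) *
        (hPSD.1.eigenvectorUnitary : Matrix (Fin n) (Fin n) ℝ) = 1 := Unitary.coe_star_mul_self _
    have hsp := hPSD.1.spectral_theorem
    rw [Unitary.conjStarAlgAut_apply] at hsp
    conv_rhs => rw [hsp]
    rw [hSdef]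
    calc _ = (hPSD.1.eigenvectorUnitary : Matrix (Fin n) (Fin n) ℝ) *
        diagonal ((↑) ∘ (Real.sqrt ·) ∘ hPSD.1.eigenvalues) *
        ((star hPSD.1.eigenvectorUnitary : Matrix (Fin n) (Fin n) ℝ) *
        (hPSD.1.eigenvectorUnitary : Matrix (Fin n) (Fin n) ℝ)) *
        diagonal ((↑) ∘ (Real.sqrt ·) ∘ hPSD.1.eigenvalues) *
        (star hPSD.1.eigenvectorUnitary : Matrix (Fin n) (Fin n) ℝ) := by
          simp only [Matrix.mul_assoc]
      _ = _ := by
          rw [hWW, Matrix.mul_one, Matrix.mul_assoc _ (diagonal _) (diagonal _),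
            diagonal_mul_diagonal]
          congr 3
          funext i
          simp [Real.mul_self_sqrt (hPSD.eigenvalues_nonneg i)]
  have hH : S.IsHermitian := hS.1
  set e : Fin n → ℝ := hH.eigenvalues with he_def
  have he : ∀ i, 0 ≤ e i := fun i => hS.eigenvalues_nonneg i
  set V : Matrix (Fin n) (Fin n) ℝ := (hH.eigenvectorUnitary : Matrix (Fin n) (Fin n) ℝ)
    with hVdef
  have hVmem : V ∈ Matrix.unitaryGroup (Fin n) ℝ := hH.eigenvectorUnitary.2
  have hVVt : V * Vᵀ = 1 := by
    have := Matrix.mem_unitaryGroup_iff.mp hVmem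
    rwa [Matrix.star_eq_conjTranspose, Matrix.conjTranspose_eq_transpose_of_trivial] at this
  have hVtV : Vᵀ * V = 1 := by
    have := Matrix.mem_unitaryGroup_iff'.mp hVmem
    rwa [Matrix.star_eq_conjTranspose, Matrix.conjTranspose_eq_transpose_of_trivial] at this
  set D : Matrix (Fin n) (Fin n) ℝ := Matrix.diagonal e with hDdef
  have hspec : S = V * D * Vᵀ := by
    have h := hH.spectral_theorem
    rw [Unitary.conjStarAlgAut_apply, Matrix.star_eq_conjTranspose,
      Matrix.conjTranspose_eq_transpose_of_trivial] at h
    simpa [RCLike.ofReal_real_eq_id] using h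
  set B : Matrix (Fin n) (Fin n) ℝ := M * V with hBdef
  have hBtB : Bᵀ * B = D * D := by
    have h1 : Bᵀ * B = Vᵀ * (S * S) * V := by
      rw [hBdef, Matrix.transpose_mul, hSS]
      simp only [Matrix.mul_assoc]
    have h2 : (Vᵀ * S * V) * (Vᵀ * S * V) = Vᵀ * (S * S) * V := by
      calc (Vᵀ * S * V) * (Vᵀ * S * V) = Vᵀ * S * (V * Vᵀ) * S * V := by
            simp only [Matrix.mul_assoc]
        _ = Vᵀ * (S * S) * V := by rw [hVVt, Matrix.mul_one]; simp only [Matrix.mul_assoc]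
    have h3 : Vᵀ * S * V = D := by
      rw [hspec]
      calc Vᵀ * (V * D * Vᵀ) * V = (Vᵀ * V) * D * (Vᵀ * V) := by simp only [Matrix.mul_assoc]
        _ = D := by rw [hVtV, Matrix.one_mul, Matrix.mul_one]
    rw [h1, ← h2, h3]
  have hcol : ∀ i j, (∑ k, B k i * B k j) = if i = j then e i * e i else 0 := by
    intro i j
    have h := congrFun (congrFun hBtB i) j
    rw [hDdef, Matrix.diagonal_mul_diagonal] at h
    simpa [Matrix.mul_apply, Matrix.transpose_apply, Matrix.diagonal_apply] using h
  set col : Fin n → EucSp n := fun j => (WithLp.equiv 2 _).symm (fun i => B i j) with hcoldef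
  set v : Fin n → EucSp n := fun j => (e j)⁻¹ • col j with hvdef
  set s : Set (Fin n) := {j | e j ≠ 0} with hsdef
  have hinner : ∀ a b : Fin n, (inner ℝ (col a) (col b) : ℝ) = ∑ k, B k a * B k b := by
    intro a b
    simp [hcoldef, PiLp.inner_apply, RCLike.inner_apply, conj_trivial, mul_comm]
  have hortho : Orthonormal ℝ (s.restrict v) := by
    rw [orthonormal_iff_ite]
    rintro ⟨i, hi⟩ ⟨j, hj⟩
    have hi' : e i ≠ 0 := hi
    have hj' : e j ≠ 0 := hj
    have h1 : (inner ℝ (v i) (v j) : ℝ) = (e i)⁻¹ * ((e j)⁻¹ * (inner ℝ (col i) (col j) : ℝ)) := by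
      show (inner ℝ ((e i)⁻¹ • col i) ((e j)⁻¹ • col j) : ℝ) = _
      rw [real_inner_smul_left, real_inner_smul_right]
    have h2 : (inner ℝ (Set.restrict s v ⟨i, hi⟩) (Set.restrict s v ⟨j, hj⟩) : ℝ)
        = (e i)⁻¹ * ((e j)⁻¹ * (∑ k, B k i * B k j)) := by
      show inner ℝ (v i) (v j) = _
      rw [h1, hinner]
    rw [h2, hcol i j]
    by_cases hij : i = j
    · subst hij
      simp only [if_pos rfl, Subtype.mk.injEq]
      field_simp
      simp
    · rw [if_neg hij, if_neg (by simpa [Subtype.mk.injEq] using hij)]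
      simp
  have hcard : Module.finrank ℝ (EucSp n) = Fintype.card (Fin n) := by
    simp [finrank_euclideanSpace]
  obtain ⟨b, hb⟩ := hortho.exists_orthonormalBasis_extension_of_card_eq hcard
  set U : Matrix (Fin n) (Fin n) ℝ := Matrix.of (fun i j => b j i) with hUdef
  have hUtU : Uᵀ * U = 1 := by
    ext i j
    have h := orthonormal_iff_ite.mp b.orthonormal i j
    simp only [PiLp.inner_apply, RCLike.inner_apply, conj_trivial] at h
    simpa [Matrix.mul_apply, Matrix.transpose_apply, Matrix.one_apply, hUdef, mul_comm] using h
  have hUUt : U * Uᵀ = 1 := mul_eq_one_comm.mp hUtU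
  have hBUD : B = U * D := by
    ext i j
    rw [hDdef, Matrix.mul_diagonal]
    by_cases hj : e j = 0
    · have hz : ∑ k, B k j * B k j = 0 := by simpa [hj] using hcol j j
      have hBij : B i j = 0 := by
        have hnn : ∀ k ∈ (Finset.univ : Finset (Fin n)), 0 ≤ B k j * B k j := fun k _ => mul_self_nonneg _
        have h := (Finset.sum_eq_zero_iff_of_nonneg hnn).mp hz i (Finset.mem_univ i)
        exact mul_self_eq_zero.mp h
      simp [hBij, hj]
    · have hbj : b j = v j := hb j hj
      have hU : U i j = (e j)⁻¹ * B i j := by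
        show b j i = _
        rw [hbj, hvdef]
        simp [hcoldef]
      rw [hU]
      field_simp
  have hM : M = U * D * Vᵀ := by
    have h : M = B * Vᵀ := by rw [hBdef, Matrix.mul_assoc, hVVt, Matrix.mul_one]
    rw [h, hBUD]
  have htrS : S.trace = ∑ i, e i := by
    rw [hspec, Matrix.trace_mul_cycle, hVtV, Matrix.one_mul, hDdef, Matrix.trace_diagonal]
  rw [hmsqrt]
  have hQ0orth : IsOrthMat (V * Uᵀ) := by
    constructor
    · rw [Matrix.transpose_mul, Matrix.transpose_transpose]
      calc V * Uᵀ * (U * Vᵀ) = V * (Uᵀ * U) * Vᵀ := by simp only [Matrix.mul_assoc]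
        _ = 1 := by rw [hUtU, Matrix.mul_one, hVVt]
    · rw [Matrix.transpose_mul, Matrix.transpose_transpose]
      calc U * Vᵀ * (V * Uᵀ) = U * (Vᵀ * V) * Uᵀ := by simp only [Matrix.mul_assoc]
        _ = 1 := by rw [hVtV, Matrix.mul_one, hUUt]
  have hQ0tr : S.trace = Matrix.trace (M * (V * Uᵀ)) := by
    rw [hM]
    have h : U * D * Vᵀ * (V * Uᵀ) = U * D * Uᵀ := by
      calc U * D * Vᵀ * (V * Uᵀ) = U * D * (Vᵀ * V) * Uᵀ := by simp only [Matrix.mul_assoc]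
        _ = U * D * Uᵀ := by rw [hVtV, Matrix.mul_one]
    rw [h, Matrix.trace_mul_cycle U D Uᵀ, hUtU, Matrix.one_mul, hDdef, Matrix.trace_diagonal, htrS]
  have hub : ∀ t ∈ {t : ℝ | ∃ Q, IsOrthMat Q ∧ t = Matrix.trace (M * Q)}, t ≤ S.trace := by
    rintro t ⟨Q, ⟨hQ1, hQ2⟩, rfl⟩
    set R : Matrix (Fin n) (Fin n) ℝ := Vᵀ * Q * U with hRdef
    have hRRt : R * Rᵀ = 1 := by
      rw [hRdef, Matrix.transpose_mul, Matrix.transpose_mul, Matrix.transpose_transpose]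
      calc Vᵀ * Q * U * (Uᵀ * (Qᵀ * Vᵀᵀ)) = Vᵀ * Q * (U * Uᵀ) * (Qᵀ * Vᵀᵀ) := by
            simp only [Matrix.mul_assoc]
        _ = Vᵀ * (Q * Qᵀ) * V := by
            rw [hUUt, Matrix.mul_one, Matrix.transpose_transpose]
            simp only [Matrix.mul_assoc]
        _ = 1 := by rw [hQ1, Matrix.mul_one, hVtV]
    have hRdiag : ∀ i, R i i ≤ 1 := by
      intro i
      have h1 : ∑ j, R i j * R i j = 1 := by
        have h := congrFun (congrFun hRRt i) i
        simpa [Matrix.mul_apply, Matrix.transpose_apply, Matrix.one_apply] using h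
      have h2 : R i i * R i i ≤ 1 := by
        rw [← h1]
        exact Finset.single_le_sum (f := fun j => R i j * R i j) (fun j _ => mul_self_nonneg _) (Finset.mem_univ i)
      nlinarith
    have htr : Matrix.trace (M * Q) = ∑ i, e i * R i i := by
      rw [hM]
      have h1 : U * D * Vᵀ * Q = U * (D * (Vᵀ * Q)) := by simp only [Matrix.mul_assoc]
      rw [h1, Matrix.trace_mul_comm]
      have h2 : D * (Vᵀ * Q) * U = D * R := by rw [hRdef]; simp only [Matrix.mul_assoc]
      rw [h2, hDdef]
      simp [Matrix.trace, Matrix.diag, Matrix.diagonal_mul]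
    rw [htr, htrS]
    exact Finset.sum_le_sum fun i _ => by nlinarith [hRdiag i, he i]
  have hn0 : (0:ℝ) < n := by
    have : (2:ℝ) ≤ n := by exact_mod_cast hn
    linarith
  have hdet : |M.det| = ∏ i, e i := by
    have hU2 : U.det * U.det = 1 := by
      have h := congrArg Matrix.det hUtU
      simpa [Matrix.det_mul, Matrix.det_transpose, mul_comm] using h
    have hU1 : |U.det| = 1 := by
      rcases mul_self_eq_one_iff.mp hU2 with h | h <;> simp [h]
    have hV2 : V.det * V.det = 1 := by
      have h := congrArg Matrix.det hVtV
      simpa [Matrix.det_mul, Matrix.det_transpose, mul_comm] using h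
    have hV1 : |Vᵀ.det| = 1 := by
      rw [Matrix.det_transpose]
      rcases mul_self_eq_one_iff.mp hV2 with h | h <;> simp [h]
    rw [hM, Matrix.det_mul, Matrix.det_mul, abs_mul, abs_mul, hU1, hV1, one_mul, mul_one,
      hDdef, Matrix.det_diagonal, abs_of_nonneg (Finset.prod_nonneg fun i _ => he i)]
  have amgm := Real.geom_mean_le_arith_mean_weighted Finset.univ (fun _ => (n:ℝ)⁻¹) e
    (fun i _ => by positivity)
    (by rw [Finset.sum_const, Finset.card_univ, Fintype.card_fin, nsmul_eq_mul,
          mul_inv_cancel₀ hn0.ne'])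
    (fun i _ => he i)
  rw [Real.finset_prod_rpow _ _ (fun i _ => he i), ← Finset.mul_sum] at amgm
  refine ⟨hsymm, hPSD, ⟨⟨V * Uᵀ, hQ0orth, hQ0tr⟩, hub⟩, ?_⟩
  rw [ge_iff_le, htrS, hdet, one_div]
  calc (n:ℝ) * (∏ i, e i) ^ ((n:ℝ)⁻¹) ≤ (n:ℝ) * ((n:ℝ)⁻¹ * ∑ i, e i) :=
      mul_le_mul_of_nonneg_left amgm hn0.le
    _ = ∑ i, e i := by field_simp

end
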